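/- arXiv:1207.5197 — 4 statements merged into one kernel-verified Lean document; each statement's English description precedes it below -/
import Mathlib

section
/- For 0 < k < 1, the derivative of the complete elliptic integral of the first kind satisfies dK/dk = E(k)/(k(1-k²)) - K(k)/k, where E is the complete elliptic integral of the second kind. -/
open Real Set

/-- Complete elliptic integral of the first kind. -/
noncomputable def ellK (k : ℝ) : ℝ :=
  ∫ θ in (0:ℝ)..(π/2), 1 / Real.sqrt (1 - k^2 * Real.sin θ ^ 2)

/-- Complete elliptic integral of the second kind. -/
noncomputable def ellE (k : ℝ) : ℝ :=
  ∫ θ in (0:ℝ)..(π/2), Real.sqrt (1 - k^2 * Real.sin θ ^ 2)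

lemma ell_delta_pos {x : ℝ} (hx : x^2 < 1) (θ : ℝ) : 0 < 1 - x^2 * Real.sin θ ^ 2 := by
  nlinarith [Real.sin_sq_le_one θ, sq_nonneg x, sq_nonneg (Real.sin θ)]

lemma ell_sqrt_cont {x : ℝ} (hx : x^2 < 1) :
    Continuous fun θ => Real.sqrt (1 - x^2 * Real.sin θ ^ 2) :=
  Real.continuous_sqrt.comp (by continuity)

lemma hasDerivAt_F {x s : ℝ} (h : 0 < 1 - x^2 * s^2) :
    HasDerivAt (fun y => 1 / Real.sqrt (1 - y^2 * s^2))
      (x * s^2 / Real.sqrt (1 - x^2 * s^2) ^ 3) x := by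
  have hu : HasDerivAt (fun y : ℝ => 1 - y^2 * s^2) (-(2*x*s^2)) x := by
    have : HasDerivAt (fun y : ℝ => y^2) (2*x) x := by
      simpa using (hasDerivAt_pow 2 x)
    simpa [mul_comm, mul_assoc] using ((this.mul_const (s^2)).const_sub 1)
  have hs : Real.sqrt (1 - x^2 * s^2) ≠ 0 := (Real.sqrt_pos.mpr h).ne'
  have hq := (hasDerivAt_const x (1:ℝ)).fun_div (hu.sqrt h.ne') hs
  refine hq.congr_deriv (Eq.symm ?_)
  have h2 : Real.sqrt (1 - x^2*s^2) ^ 2 = 1 - x^2*s^2 := Real.sq_sqrt h.le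
  have h3 : Real.sqrt (1 - x^2*s^2) ^ 3 = (1 - x^2*s^2) * Real.sqrt (1 - x^2*s^2) := by
    rw [pow_succ, h2]
  rw [h3, h2]
  field_simp
  ring

lemma hasDerivAt_g {k : ℝ} (hk2 : k^2 < 1) (θ : ℝ) :
    HasDerivAt (fun θ => Real.sin θ * Real.cos θ / Real.sqrt (1 - k^2 * Real.sin θ ^ 2))
      ((1 - Real.sin θ ^ 2) / Real.sqrt (1 - k^2 * Real.sin θ ^ 2)
        - (1 - k^2) * Real.sin θ ^ 2 / Real.sqrt (1 - k^2 * Real.sin θ ^ 2) ^ 3) θ := by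
  have hΔ : (0:ℝ) < 1 - k^2 * Real.sin θ ^ 2 := ell_delta_pos hk2 θ
  have hqpos : 0 < Real.sqrt (1 - k^2 * Real.sin θ ^ 2) := Real.sqrt_pos.mpr hΔ
  have hu : HasDerivAt (fun θ : ℝ => 1 - k^2 * Real.sin θ ^ 2)
      (-(k^2 * (2 * Real.sin θ * Real.cos θ))) θ := by
    have h1 : HasDerivAt (fun θ : ℝ => Real.sin θ ^ 2) (2 * Real.sin θ * Real.cos θ) θ := by
      simpa [mul_comm, mul_assoc] using ((Real.hasDerivAt_sin θ).fun_pow 2)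
    simpa [mul_comm, mul_assoc, mul_left_comm] using (h1.const_mul (k^2)).const_sub 1
  have hsc : HasDerivAt (fun θ : ℝ => Real.sin θ * Real.cos θ)
      (Real.cos θ * Real.cos θ + Real.sin θ * (-Real.sin θ)) θ :=
    (Real.hasDerivAt_sin θ).mul (Real.hasDerivAt_cos θ)
  have hq := hsc.fun_div (hu.sqrt hΔ.ne') hqpos.ne'
  refine hq.congr_deriv (Eq.symm ?_)
  set q := Real.sqrt (1 - k^2 * Real.sin θ ^ 2) with hqdef
  have hq2 : q^2 = 1 - k^2 * Real.sin θ ^ 2 := Real.sq_sqrt hΔ.le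
  have hc : Real.cos θ ^2 = 1 - Real.sin θ ^ 2 := Real.cos_sq' θ
  set s := Real.sin θ; set c := Real.cos θ
  field_simp
  linear_combination (-(q^2 + s^2*k^2)) * hc + s^2 * hq2

lemma hasDerivAt_ellK (k : ℝ) (hk : k ∈ Ioo (0:ℝ) 1) :
    HasDerivAt ellK
      (∫ θ in (0:ℝ)..(π/2),
        k * Real.sin θ ^ 2 / Real.sqrt (1 - k^2 * Real.sin θ ^ 2) ^ 3) k := by
  obtain ⟨hk0, hk1⟩ := hk
  have hk2 : k^2 < 1 := by nlinarith
  set ε := (1 - k)/2 with hε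
  have hεpos : 0 < ε := by rw [hε]; linarith
  set δ := 1 - ((1+k)/2)^2 with hδ
  have hδpos : 0 < δ := by rw [hδ]; nlinarith
  have hball : ∀ x ∈ Metric.ball k ε, x^2 ≤ 1 - δ := by
    intro x hx
    rw [Metric.mem_ball, Real.dist_eq, abs_lt, hε] at hx
    rw [hδ]
    nlinarith [hx.1, hx.2]
  have hΔball : ∀ x ∈ Metric.ball k ε, ∀ θ : ℝ, δ ≤ 1 - x^2 * Real.sin θ ^ 2 := by
    intro x hx θ
    have := hball x hx
    nlinarith [Real.sin_sq_le_one θ, sq_nonneg x, sq_nonneg (Real.sin θ), sq_nonneg (x * Real.sin θ)]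
  have hcont : ∀ x : ℝ, x^2 < 1 →
      Continuous fun θ => 1 / Real.sqrt (1 - x^2 * Real.sin θ ^ 2) := by
    intro x hx
    exact continuous_const.div (ell_sqrt_cont hx)
      (fun θ => (Real.sqrt_pos.mpr (ell_delta_pos hx θ)).ne')
  have key := (intervalIntegral.hasDerivAt_integral_of_dominated_loc_of_deriv_le
    (F := fun x θ => 1 / Real.sqrt (1 - x^2 * Real.sin θ ^ 2))
    (F' := fun x θ => x * Real.sin θ ^ 2 / Real.sqrt (1 - x^2 * Real.sin θ ^ 2) ^ 3)
    (bound := fun _ => 1 / Real.sqrt δ ^ 3)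
    (μ := MeasureTheory.volume) (a := (0:ℝ)) (b := π/2)
    (Metric.ball_mem_nhds k hεpos)
    (by
      filter_upwards [Metric.ball_mem_nhds k hεpos] with x hx
      have hx2 : x^2 < 1 := lt_of_le_of_lt (hball x hx) (by linarith)
      exact (hcont x hx2).aestronglyMeasurable)
    ((hcont k hk2).intervalIntegrable _ _)
    (by
      apply Continuous.aestronglyMeasurable
      exact (continuous_const.mul (by continuity)).div
        ((ell_sqrt_cont hk2).pow 3)
        (fun θ => pow_ne_zero 3 (Real.sqrt_pos.mpr (ell_delta_pos hk2 θ)).ne')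
      )
    (by
      apply MeasureTheory.ae_of_all
      intro θ _ x hx
      have hΔ := hΔball x hx θ
      have hq3 : Real.sqrt δ ^ 3 ≤ Real.sqrt (1 - x^2 * Real.sin θ ^ 2) ^ 3 :=
        pow_le_pow_left₀ (Real.sqrt_nonneg _) (Real.sqrt_le_sqrt hΔ) 3
      have hqδ : 0 < Real.sqrt δ ^ 3 := by positivity
      have hnum : |x| * Real.sin θ ^ 2 ≤ 1 := by
        have hx1 : |x| ≤ 1 := by
          have := hball x hx
          rw [abs_le]; constructor <;> nlinarith
        nlinarith [Real.sin_sq_le_one θ, sq_nonneg (Real.sin θ), abs_nonneg x]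
      rw [Real.norm_eq_abs, abs_div, abs_mul, abs_pow, abs_pow, sq_abs,
        abs_of_nonneg (Real.sqrt_nonneg _)]
      exact div_le_div₀ (by positivity) hnum hqδ hq3)
    (by
      apply Continuous.intervalIntegrable
      continuity)
    (by
      apply MeasureTheory.ae_of_all
      intro θ _ x hx
      have hx2 : x^2 < 1 := lt_of_le_of_lt (hball x hx) (by linarith)
      exact hasDerivAt_F (ell_delta_pos hx2 θ))).2
  exact key

theorem deriv_ellK (k : ℝ) (hk : k ∈ Ioo (0:ℝ) 1) :
    deriv ellK k = ellE k / (k * (1 - k^2)) - ellK k / k := by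
  obtain ⟨hk0, hk1⟩ := hk
  have hk2 : k^2 < 1 := by nlinarith
  have hΔ : ∀ θ : ℝ, 0 < 1 - k^2 * Real.sin θ ^ 2 := ell_delta_pos hk2
  have hqpos : ∀ θ : ℝ, 0 < Real.sqrt (1 - k^2 * Real.sin θ ^ 2) :=
    fun θ => Real.sqrt_pos.mpr (hΔ θ)
  -- continuity facts
  have hcK : Continuous fun θ => 1 / Real.sqrt (1 - k^2 * Real.sin θ ^ 2) :=
    continuous_const.div (ell_sqrt_cont hk2) (fun θ => (hqpos θ).ne')
  have hcE : Continuous fun θ => Real.sqrt (1 - k^2 * Real.sin θ ^ 2) := ell_sqrt_cont hk2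
  have hc3 : Continuous fun θ => Real.sin θ ^ 2 / Real.sqrt (1 - k^2 * Real.sin θ ^ 2) ^ 3 :=
    (by continuity : Continuous fun θ : ℝ => Real.sin θ ^ 2).div
      ((ell_sqrt_cont hk2).pow 3) (fun θ => pow_ne_zero 3 (hqpos θ).ne')
  -- abbreviations
  set I1 := ellK k with hI1
  set I2 := ellE k with hI2
  set I3 := ∫ θ in (0:ℝ)..(π/2), Real.sin θ ^ 2 / Real.sqrt (1 - k^2 * Real.sin θ ^ 2) ^ 3
    with hI3
  -- derivative value
  have hderiv : deriv ellK k = k * I3 := by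
    have h := (hasDerivAt_ellK k ⟨hk0, hk1⟩).deriv
    rw [h, hI3, ← intervalIntegral.integral_const_mul]
    congr 1; ext θ; ring
  -- FTC identity: ∫ (1-s²)/√Δ = (1-k²) I3
  have hftc : (∫ θ in (0:ℝ)..(π/2),
      ((1 - Real.sin θ ^ 2) / Real.sqrt (1 - k^2 * Real.sin θ ^ 2)
        - (1 - k^2) * Real.sin θ ^ 2 / Real.sqrt (1 - k^2 * Real.sin θ ^ 2) ^ 3)) = 0 := by
    have h := intervalIntegral.integral_eq_sub_of_hasDerivAt
      (f := fun θ => Real.sin θ * Real.cos θ / Real.sqrt (1 - k^2 * Real.sin θ ^ 2))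
      (a := (0:ℝ)) (b := π/2)
      (fun θ _ => hasDerivAt_g hk2 θ)
      (by
        apply Continuous.intervalIntegrable
        apply Continuous.sub
        · exact (by continuity : Continuous fun θ : ℝ => 1 - Real.sin θ ^ 2).div
            (ell_sqrt_cont hk2) (fun θ => (hqpos θ).ne')
        · exact (continuous_const.mul (by continuity)).div
            ((ell_sqrt_cont hk2).pow 3) (fun θ => pow_ne_zero 3 (hqpos θ).ne'))
    rw [h]
    norm_num [Real.cos_pi_div_two, Real.sin_pi_div_two]
  -- split the FTC integral
  have hint1 : IntervalIntegrable
      (fun θ => (1 - Real.sin θ ^ 2) / Real.sqrt (1 - k^2 * Real.sin θ ^ 2))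
      MeasureTheory.volume 0 (π/2) := by
    apply Continuous.intervalIntegrable
    exact (by continuity : Continuous fun θ : ℝ => 1 - Real.sin θ ^ 2).div
      (ell_sqrt_cont hk2) (fun θ => (hqpos θ).ne')
  have hint2 : IntervalIntegrable
      (fun θ => (1 - k^2) * Real.sin θ ^ 2 / Real.sqrt (1 - k^2 * Real.sin θ ^ 2) ^ 3)
      MeasureTheory.volume 0 (π/2) := by
    apply Continuous.intervalIntegrable
    exact (continuous_const.mul (by continuity)).div
      ((ell_sqrt_cont hk2).pow 3) (fun θ => pow_ne_zero 3 (hqpos θ).ne')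
  have hJ : (∫ θ in (0:ℝ)..(π/2),
      (1 - Real.sin θ ^ 2) / Real.sqrt (1 - k^2 * Real.sin θ ^ 2)) = (1 - k^2) * I3 := by
    have := intervalIntegral.integral_sub hint1 hint2
    rw [hftc] at this
    have h2 : (∫ θ in (0:ℝ)..(π/2),
        (1 - k^2) * Real.sin θ ^ 2 / Real.sqrt (1 - k^2 * Real.sin θ ^ 2) ^ 3)
        = (1 - k^2) * I3 := by
      rw [hI3, ← intervalIntegral.integral_const_mul]
      congr 1; ext θ; ring
    linarith [this.symm, h2]
  -- J in terms of I1, I2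
  have hJ2 : (∫ θ in (0:ℝ)..(π/2),
      (1 - Real.sin θ ^ 2) / Real.sqrt (1 - k^2 * Real.sin θ ^ 2))
      = (1 - 1/k^2) * I1 + (1/k^2) * I2 := by
    have hpt : ∀ θ : ℝ, (1 - Real.sin θ ^ 2) / Real.sqrt (1 - k^2 * Real.sin θ ^ 2)
        = (1 - 1/k^2) * (1 / Real.sqrt (1 - k^2 * Real.sin θ ^ 2))
          + (1/k^2) * Real.sqrt (1 - k^2 * Real.sin θ ^ 2) := by
      intro θ
      have hq2 : Real.sqrt (1 - k^2 * Real.sin θ ^ 2) ^ 2 = 1 - k^2 * Real.sin θ ^ 2 :=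
        Real.sq_sqrt (hΔ θ).le
      have hk0' : (k:ℝ) ≠ 0 := hk0.ne'
      have hq0 : Real.sqrt (1 - k^2 * Real.sin θ ^ 2) ≠ 0 := (hqpos θ).ne'
      generalize Real.sqrt (1 - k^2 * Real.sin θ ^ 2) = q at hq2 hq0 ⊢
      field_simp
      linear_combination (-1) * hq2
    rw [intervalIntegral.integral_congr (fun θ _ => hpt θ)]
    rw [intervalIntegral.integral_add
      ((continuous_const.fun_mul hcK).intervalIntegrable _ _)
      ((continuous_const.fun_mul hcE).intervalIntegrable _ _),
      intervalIntegral.integral_const_mul, intervalIntegral.integral_const_mul]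
    rfl
  -- combine
  have h1k : (1:ℝ) - k^2 ≠ 0 := by nlinarith
  have hI3val : I3 = ((1 - 1/k^2) * I1 + (1/k^2) * I2) / (1 - k^2) := by
    rw [← hJ2, hJ, mul_div_cancel_left₀ _ h1k]
  rw [hderiv, hI3val]
  field_simp
  ring
end

section
/- (Ascending Landen transformation) For 0 < k < 1, (1+k)·K(k) = K(2√k/(1+k)), where K is the complete elliptic integral of the first kind. -/
open Real Set

section aux
variable {k : ℝ}

private lemma landen_den_pos (hk0 : 0 < k) (hk1 : k < 1) (φ : ℝ) :
    0 < 1 + k * Real.cos (2*φ) := by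
  nlinarith [Real.neg_one_le_cos (2*φ), Real.cos_le_one (2*φ)]

private lemma landen_Q_pos (hk0 : 0 < k) (hk1 : k < 1) (φ : ℝ) :
    0 < 1 + 2*k*Real.cos (2*φ) + k^2 := by
  nlinarith [Real.neg_one_le_cos (2*φ), Real.cos_le_one (2*φ)]

private lemma landen_hasDerivAt (hk0 : 0 < k) (hk1 : k < 1) (φ : ℝ) :
    HasDerivAt (fun φ : ℝ => 2*φ - arctan (k * Real.sin (2*φ) / (1 + k * Real.cos (2*φ))))
      (2*(1 + k * Real.cos (2*φ)) / (1 + 2*k*Real.cos (2*φ) + k^2)) φ := by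
  have hden : 0 < 1 + k * Real.cos (2*φ) := landen_den_pos hk0 hk1 φ
  have hQ : 0 < 1 + 2*k*Real.cos (2*φ) + k^2 := landen_Q_pos hk0 hk1 φ
  have h2 : HasDerivAt (fun φ : ℝ => 2*φ) 2 φ := by
    simpa using (hasDerivAt_id φ).const_mul 2
  have hs : HasDerivAt (fun φ : ℝ => Real.sin (2*φ)) (Real.cos (2*φ) * 2) φ :=
    (Real.hasDerivAt_sin (2*φ)).comp φ h2
  have hc : HasDerivAt (fun φ : ℝ => Real.cos (2*φ)) (-Real.sin (2*φ) * 2) φ :=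
    (Real.hasDerivAt_cos (2*φ)).comp φ h2
  have hnum : HasDerivAt (fun φ : ℝ => k * Real.sin (2*φ)) (k * (Real.cos (2*φ) * 2)) φ :=
    hs.const_mul k
  have hden' : HasDerivAt (fun φ : ℝ => 1 + k * Real.cos (2*φ)) (k * (-Real.sin (2*φ) * 2)) φ :=
    (hc.const_mul k).const_add 1
  have hu : HasDerivAt (fun φ : ℝ => k * Real.sin (2*φ) / (1 + k * Real.cos (2*φ)))
      ((k * (Real.cos (2*φ) * 2) * (1 + k * Real.cos (2*φ)) -
        k * Real.sin (2*φ) * (k * (-Real.sin (2*φ) * 2))) / (1 + k * Real.cos (2*φ))^2) φ :=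
    hnum.div hden' (ne_of_gt hden)
  have harc := hu.arctan
  have := h2.sub harc
  convert this using 1
  case e'_4 => rfl
  case e'_5 => rfl
  case e'_8 => rfl
  have hp : Real.sin (2*φ)^2 + Real.cos (2*φ)^2 = 1 := Real.sin_sq_add_cos_sq _
  set c := Real.cos (2*φ); set s := Real.sin (2*φ)
  have h1 : (1 + (k * s / (1 + k * c))^2) = (1+2*k*c+k^2)/(1+k*c)^2 := by
    field_simp; nlinarith [hp]
  rw [h1]
  field_simp
  linear_combination k^2 * hp

private lemma landen_sin_g (hk0 : 0 < k) (hk1 : k < 1) (φ : ℝ) :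
    Real.sin (2*φ - arctan (k * Real.sin (2*φ) / (1 + k * Real.cos (2*φ))))
      = Real.sin (2*φ) / Real.sqrt (1 + 2*k*Real.cos (2*φ) + k^2) := by
  have hden : 0 < 1 + k * Real.cos (2*φ) := landen_den_pos hk0 hk1 φ
  have hQ : 0 < 1 + 2*k*Real.cos (2*φ) + k^2 := landen_Q_pos hk0 hk1 φ
  have hp : Real.sin (2*φ)^2 + Real.cos (2*φ)^2 = 1 := Real.sin_sq_add_cos_sq _
  set c := Real.cos (2*φ) with hcdef; set s := Real.sin (2*φ) with hsdef
  have h1 : (1 + (k * s / (1 + k * c))^2) = (1+2*k*c+k^2)/(1+k*c)^2 := by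
    field_simp; nlinarith [hp]
  have hsq : Real.sqrt (1 + (k * s / (1 + k * c))^2)
      = Real.sqrt (1+2*k*c+k^2) / (1+k*c) := by
    rw [h1, Real.sqrt_div hQ.le, Real.sqrt_sq hden.le]
  have hsqQ : 0 < Real.sqrt (1+2*k*c+k^2) := Real.sqrt_pos.mpr hQ
  rw [Real.sin_sub, Real.sin_arctan, Real.cos_arctan, hsq]
  rw [← hsdef, ← hcdef]
  field_simp
  ring
end aux

/-- Ascending Landen transformation. -/
theorem landen (k : ℝ) (hk : k ∈ Ioo (0:ℝ) 1) :
    (1 + k) * ellK k = ellK (2 * Real.sqrt k / (1 + k)) := by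
  obtain ⟨hk0, hk1⟩ := hk
  have hk1' : (0:ℝ) < 1 + k := by linarith
  set h : ℝ → ℝ := fun θ => 1 / Real.sqrt (1 - k^2 * Real.sin θ ^ 2) with hdef
  set Q : ℝ → ℝ := fun φ => 1 + 2*k*Real.cos (2*φ) + k^2 with hQdef
  have hQpos : ∀ φ, 0 < Q φ := landen_Q_pos hk0 hk1
  have hQsqrtpos : ∀ φ, 0 < Real.sqrt (Q φ) := fun φ => Real.sqrt_pos.mpr (hQpos φ)
  -- continuity of h
  have hbase : ∀ θ : ℝ, 0 < 1 - k^2 * Real.sin θ ^ 2 := by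
    intro θ; nlinarith [Real.sin_sq_le_one θ, sq_nonneg (Real.sin θ), sq_nonneg k]
  have hconth : Continuous h := by
    apply continuous_const.div
    · exact (continuous_const.sub (continuous_const.mul ((Real.continuous_sin).pow 2))).sqrt
    · intro θ; exact ne_of_gt (Real.sqrt_pos.mpr (hbase θ))
  have hcontQ : Continuous Q := by
    rw [hQdef]; fun_prop
  have hcontInvQ : Continuous fun φ => 1 / Real.sqrt (Q φ) := by
    apply continuous_const.div hcontQ.sqrt
    intro φ; exact ne_of_gt (hQsqrtpos φ)
  -- the substitution function
  set g : ℝ → ℝ := fun φ => 2*φ - arctan (k * Real.sin (2*φ) / (1 + k * Real.cos (2*φ)))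
    with hgdef
  set g' : ℝ → ℝ := fun φ => 2*(1 + k * Real.cos (2*φ)) / Q φ with hg'def
  have hcontg' : Continuous g' := by
    apply Continuous.div
    · exact continuous_const.mul (continuous_const.add (continuous_const.mul
        (Real.continuous_cos.comp (continuous_const.mul continuous_id))))
    · exact hcontQ
    · intro φ; exact ne_of_gt (hQpos φ)
  have hsub : (∫ φ in (0:ℝ)..(π/2), g' φ • (h ∘ g) φ) = ∫ θ in (g 0)..(g (π/2)), h θ :=
    intervalIntegral.integral_comp_smul_deriv
      (fun x _ => landen_hasDerivAt hk0 hk1 x) hcontg'.continuousOn hconth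
  have hg0 : g 0 = 0 := by simp [hgdef]
  have hgpi : g (π/2) = π := by
    have : (2:ℝ) * (π/2) = π := by ring
    simp [hgdef, this, Real.sin_pi]
  -- pointwise integrand identity
  have hpoint : ∀ φ : ℝ, g' φ • (h ∘ g) φ = 2 * (1 / Real.sqrt (Q φ)) := by
    intro φ
    have hden : 0 < 1 + k * Real.cos (2*φ) := landen_den_pos hk0 hk1 φ
    have hp : Real.sin (2*φ)^2 + Real.cos (2*φ)^2 = 1 := Real.sin_sq_add_cos_sq _
    have hsin := landen_sin_g hk0 hk1 φ
    have h2 : 1 - k^2 * Real.sin (g φ) ^ 2 = (1 + k * Real.cos (2*φ))^2 / Q φ := by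
      rw [hgdef]; simp only []
      rw [hsin, div_pow, Real.sq_sqrt (hQpos φ).le]
      have hQne : (1 + 2*k*Real.cos (2*φ) + k^2) ≠ 0 := ne_of_gt (landen_Q_pos hk0 hk1 φ)
      rw [hQdef]; simp only []
      rw [eq_div_iff hQne, sub_mul, mul_div_assoc', div_mul_cancel₀ _ hQne]
      linear_combination (-k^2) * hp
    have h3 : Real.sqrt (1 - k^2 * Real.sin (g φ) ^ 2)
        = (1 + k * Real.cos (2*φ)) / Real.sqrt (Q φ) := by
      rw [h2, Real.sqrt_div (by positivity), Real.sqrt_sq hden.le]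
    show g' φ * h (g φ) = 2 * (1 / Real.sqrt (Q φ))
    rw [hdef]; simp only []
    rw [h3, hg'def]; simp only []
    rw [one_div_div]
    have hq := Real.sq_sqrt (hQpos φ).le
    have hs0 : Real.sqrt (Q φ) ≠ 0 := ne_of_gt (hQsqrtpos φ)
    have hd0 : (1 + k * Real.cos (2*φ)) ≠ 0 := ne_of_gt hden
    have hQ0 : Q φ ≠ 0 := ne_of_gt (hQpos φ)
    field_simp
    linear_combination hq
  -- LHS of hsub equals 2 * ∫ 1/√Q
  have hL : (∫ φ in (0:ℝ)..(π/2), g' φ • (h ∘ g) φ)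
      = 2 * ∫ φ in (0:ℝ)..(π/2), 1 / Real.sqrt (Q φ) := by
    rw [← intervalIntegral.integral_const_mul]
    exact intervalIntegral.integral_congr (fun φ _ => hpoint φ)
  -- ∫_0^π h = 2 ellK k
  have hint : ∀ a b : ℝ, IntervalIntegrable h MeasureTheory.volume a b :=
    fun a b => hconth.intervalIntegrable a b
  have hsym : (∫ θ in (π/2:ℝ)..π, h θ) = ∫ θ in (0:ℝ)..(π/2), h θ := by
    have hc := intervalIntegral.integral_comp_sub_left (a := (0:ℝ)) (b := π/2) h π
    have e1 : π - π/2 = π/2 := by ring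
    have e2 : π - 0 = π := by ring
    rw [e1, e2] at hc
    rw [← hc]
    apply intervalIntegral.integral_congr
    intro θ _
    simp [hdef, Real.sin_pi_sub]
  have hsplit : (∫ θ in (0:ℝ)..π, h θ)
      = (∫ θ in (0:ℝ)..(π/2), h θ) + ∫ θ in (π/2:ℝ)..π, h θ :=
    (intervalIntegral.integral_add_adjacent_intervals (hint _ _) (hint _ _)).symm
  have hfull : (∫ θ in (0:ℝ)..π, h θ) = 2 * ellK k := by
    have he : ellK k = ∫ θ in (0:ℝ)..(π/2), h θ := rfl
    rw [hsplit, hsym, he]; ring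
  -- RHS: ellK k1
  have hk1sq : (2 * Real.sqrt k / (1 + k))^2 = 4*k/(1+k)^2 := by
    rw [div_pow, mul_pow, Real.sq_sqrt hk0.le]; ring_nf
  have hrhs : ellK (2 * Real.sqrt k / (1 + k))
      = (1+k) * ∫ φ in (0:ℝ)..(π/2), 1 / Real.sqrt (Q φ) := by
    rw [ellK, ← intervalIntegral.integral_const_mul]
    apply intervalIntegral.integral_congr
    intro φ _
    dsimp only
    have hp : Real.sin φ^2 + Real.cos φ^2 = 1 := Real.sin_sq_add_cos_sq φ
    have hcos2 : Real.cos (2*φ) = 2 * Real.cos φ^2 - 1 := Real.cos_two_mul φ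
    have he : 1 - (2 * Real.sqrt k / (1 + k))^2 * Real.sin φ^2 = Q φ / (1+k)^2 := by
      rw [hk1sq, hQdef]; simp only []
      rw [hcos2]
      have h1k : (1+k) ≠ 0 := ne_of_gt hk1'
      field_simp
      linear_combination (-4*k) * hp
    rw [he, Real.sqrt_div (hQpos φ).le, Real.sqrt_sq hk1'.le]
    rw [one_div_div, mul_one_div]
  -- combine
  have chain : 2 * ellK (2 * Real.sqrt k / (1 + k)) = (1+k) * (2 * ellK k) := by
    have hsub2 : (∫ φ in (0:ℝ)..(π/2), g' φ • (h ∘ g) φ) = ∫ θ in (0:ℝ)..π, h θ := by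
      rw [hsub, hg0, hgpi]
    rw [hrhs, ← hfull, ← hsub2, hL]; ring
  linarith [chain]
end

section
/- If D(k) = U(k)·V(k) where V satisfies V'(k)/V(k) = (k²+2k-1)/(2k(1-k²)), and D satisfies k(1-k)(1+k)²D'' + (1-2k-k²)(1+k)D' + (k-1)D = 0 on (0,1), then U satisfies the Q-form equation U''(k) + ((1+k²)²/(4k²(1-k²)²))·U(k) = 0. -/
open Real Set

theorem Q_form_reduction (D U V : ℝ → ℝ)
    (hU1 : ∀ k ∈ Ioo (0:ℝ) 1, DifferentiableAt ℝ U k)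
    (hU2 : ∀ k ∈ Ioo (0:ℝ) 1, DifferentiableAt ℝ (deriv U) k)
    (hV1 : ∀ k ∈ Ioo (0:ℝ) 1, DifferentiableAt ℝ V k)
    (hV2 : ∀ k ∈ Ioo (0:ℝ) 1, DifferentiableAt ℝ (deriv V) k)
    (hVne : ∀ k ∈ Ioo (0:ℝ) 1, V k ≠ 0)
    (hDUV : ∀ k, D k = U k * V k)
    (hVode : ∀ k ∈ Ioo (0:ℝ) 1,
      deriv V k = V k * (k^2 + 2*k - 1) / (2 * k * (1 - k^2)))
    (hDode : ∀ k ∈ Ioo (0:ℝ) 1,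
      k * (1 - k) * (1 + k)^2 * deriv (deriv D) k
        + (1 - 2*k - k^2) * (1 + k) * deriv D k + (k - 1) * D k = 0) :
    ∀ k ∈ Ioo (0:ℝ) 1,
      deriv (deriv U) k + (1 + k^2)^2 / (4 * k^2 * (1 - k^2)^2) * U k = 0 := by
  intro k hk
  obtain ⟨hk0, hk1⟩ := hk
  have hkne : k ≠ 0 := ne_of_gt hk0
  have h1k : (1:ℝ) - k ≠ 0 := by linarith
  have h1pk : (1:ℝ) + k ≠ 0 := by linarith
  have hksq : (1:ℝ) - k^2 ≠ 0 := by nlinarith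
  have hIoo : Ioo (0:ℝ) 1 ∈ nhds k := isOpen_Ioo.mem_nhds ⟨hk0, hk1⟩
  -- first derivative of D on Ioo
  have hDfun : D = fun x => U x * V x := funext hDUV
  have hD1 : ∀ x ∈ Ioo (0:ℝ) 1,
      deriv D x = deriv U x * V x + U x * deriv V x := by
    intro x hx
    rw [hDfun]
    exact deriv_mul (hU1 x hx) (hV1 x hx)
  -- second derivative of D at k
  have hev : deriv D =ᶠ[nhds k] fun x => deriv U x * V x + U x * deriv V x :=
    Filter.eventuallyEq_of_mem hIoo hD1
  have hD2 : deriv (deriv D) k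
      = (deriv (deriv U) k * V k + deriv U k * deriv V k)
        + (deriv U k * deriv V k + U k * deriv (deriv V) k) := by
    rw [hev.deriv_eq]
    have h := (((hU2 k ⟨hk0, hk1⟩).hasDerivAt.mul (hV1 k ⟨hk0, hk1⟩).hasDerivAt).add
      ((hU1 k ⟨hk0, hk1⟩).hasDerivAt.mul (hV2 k ⟨hk0, hk1⟩).hasDerivAt))
    exact h.deriv
  -- second derivative of V at k via the ODE
  have hevV : deriv V =ᶠ[nhds k]
      fun x => V x * ((x^2 + 2*x - 1) / (2 * x * (1 - x^2))) := by
    refine Filter.eventuallyEq_of_mem hIoo (fun x hx => ?_)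
    rw [hVode x hx, mul_div_assoc]
  have hnum : HasDerivAt (fun x : ℝ => x^2 + 2*x - 1) (2*k + 2) k := by
    have := ((hasDerivAt_pow 2 k).add ((hasDerivAt_id k).const_mul 2)).sub_const 1
    simpa using this
  have hden : HasDerivAt (fun x : ℝ => 2 * x * (1 - x^2))
      (2 * (1 - k^2) + 2 * k * (-(2*k))) k := by
    have ha : HasDerivAt (fun x : ℝ => 2 * x) 2 k := by
      simpa using (hasDerivAt_id k).const_mul 2
    have hb : HasDerivAt (fun x : ℝ => 1 - x^2) (-(2*k)) k := by
      simpa using (hasDerivAt_pow 2 k).const_sub 1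
    simpa using ha.fun_mul hb
  have hdenne : 2 * k * (1 - k^2) ≠ 0 := by
    intro h
    rcases mul_eq_zero.mp h with h' | h'
    · rcases mul_eq_zero.mp h' with h'' | h'' <;> simp_all
    · exact hksq h'
  have hg : HasDerivAt (fun x : ℝ => (x^2 + 2*x - 1) / (2 * x * (1 - x^2)))
      (((2*k + 2) * (2 * k * (1 - k^2))
        - (k^2 + 2*k - 1) * (2 * (1 - k^2) + 2 * k * (-(2*k))))
        / (2 * k * (1 - k^2))^2) k := hnum.div hden hdenne
  have hV2' : deriv (deriv V) k
      = deriv V k * ((k^2 + 2*k - 1) / (2 * k * (1 - k^2)))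
        + V k * (((2*k + 2) * (2 * k * (1 - k^2))
          - (k^2 + 2*k - 1) * (2 * (1 - k^2) + 2 * k * (-(2*k))))
          / (2 * k * (1 - k^2))^2) := by
    rw [hevV.deriv_eq]
    exact ((hV1 k ⟨hk0, hk1⟩).hasDerivAt.mul hg).deriv
  -- assemble the key equation
  have key := hDode k ⟨hk0, hk1⟩
  rw [hD2, hD1 k ⟨hk0, hk1⟩, hDUV k, hV2', hVode k ⟨hk0, hk1⟩] at key
  have hVk := hVne k ⟨hk0, hk1⟩
  linear_combination (norm := (field_simp; ring1)) key / (V k * (k * (1-k) * (1+k)^2))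
end

section
/- The formal power series D₁(k) = Σ_{n≥0} d_n k^n with d_{2n} = d_{2n+1} = ((2n)!/(2^{2n}(n!)²))² is a formal solution of k(1-k)(1+k)²D'' + (1-2k-k²)(1+k)D' + (k-1)D = 0, i.e., the coefficient recursion from the ODE is satisfied by these d_n. -/
open PowerSeries

noncomputable def dCoeff (n : ℕ) : ℚ :=
  ((Nat.factorial (2 * (n / 2)) : ℚ) /
    (2 ^ (2 * (n / 2)) * (Nat.factorial (n / 2) : ℚ)^2))^2

noncomputable def cc (k : ℕ) : ℚ :=
  ((Nat.factorial (2 * k) : ℚ) / (2 ^ (2 * k) * (Nat.factorial k : ℚ)^2))^2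

lemma dCoeff_even (k : ℕ) : dCoeff (2 * k) = cc k := by
  simp [dCoeff, cc, Nat.mul_div_cancel_left]

lemma dCoeff_odd (k : ℕ) : dCoeff (2 * k + 1) = cc k := by
  have : (2 * k + 1) / 2 = k := by omega
  simp [dCoeff, cc, this]

lemma cc_rec (k : ℕ) : (2 * (k:ℚ) + 2)^2 * cc (k + 1) = (2 * (k:ℚ) + 1)^2 * cc k := by
  have h1 : 2 * (k + 1) = (2 * k + 1) + 1 := by ring
  rw [cc, cc, h1, Nat.factorial_succ, Nat.factorial_succ, Nat.factorial_succ]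
  have hf : ((Nat.factorial k : ℚ)) ≠ 0 := Nat.cast_ne_zero.mpr (Nat.factorial_ne_zero k)
  have hf2 : ((Nat.factorial (2*k) : ℚ)) ≠ 0 := Nat.cast_ne_zero.mpr (Nat.factorial_ne_zero _)
  have hp : (2:ℚ) ^ (2 * (k+1)) ≠ 0 := by positivity
  have hp2 : (2:ℚ) ^ (2 * k) ≠ 0 := by positivity
  have hk : ((k:ℚ) + 1) ≠ 0 := by positivity
  push_cast
  rw [h1] at hp
  field_simp
  ring

lemma key (m : ℕ) :
    ((m:ℚ)+3)^2 * dCoeff (m+3) + (((m:ℚ)+2)^2-2*((m:ℚ)+2)-1) * dCoeff (m+2)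
      + (2-((m:ℚ)+2)^2) * dCoeff (m+1) - ((m:ℚ))^2 * dCoeff m = 0 := by
  rcases Nat.even_or_odd m with ⟨k, hk⟩ | ⟨k, hk⟩
  · have hk2 : m = 2 * k := by omega
    subst hk2
    have e2 : 2*k + 2 = 2 * (k+1) := by ring
    have e3 : 2*k + 3 = 2 * (k+1) + 1 := by ring
    rw [e2, e3, dCoeff_even, dCoeff_odd, dCoeff_even, dCoeff_odd]
    have r := cc_rec k
    push_cast at r ⊢
    linear_combination 2 * r
  · subst hk
    have e1 : 2*k + 1 + 1 = 2 * (k+1) := by ring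
    have e2 : 2*k + 1 + 2 = 2 * (k+1) + 1 := by ring
    have e3 : 2*k + 1 + 3 = 2 * (k+2) := by ring
    rw [e1, e2, e3, dCoeff_odd, dCoeff_even, dCoeff_odd, dCoeff_even]
    have r1 := cc_rec (k+1)
    have r2 := cc_rec k
    push_cast at r1 r2 ⊢
    linear_combination r1 + r2

lemma coeff_derivativeFun_aux (f : PowerSeries ℚ) (n : ℕ) :
    coeff n (derivativeFun f) = coeff (n + 1) f * (n + 1) :=
  coeff_derivative f n

theorem formal_solution_picard_fuchs :
    (X * (1 - X) * (1 + X)^2 : PowerSeries ℚ) *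
        derivativeFun (derivativeFun (PowerSeries.mk dCoeff))
      + (1 - 2 * X - X^2) * (1 + X) * derivativeFun (PowerSeries.mk dCoeff)
      + (X - 1) * PowerSeries.mk dCoeff = 0 := by
  set A := derivativeFun (derivativeFun (PowerSeries.mk dCoeff)) with hA
  set B := derivativeFun (PowerSeries.mk dCoeff) with hB
  set D := PowerSeries.mk dCoeff with hD
  have h : (X * (1 - X) * (1 + X)^2 : PowerSeries ℚ) * A
      + (1 - 2 * X - X^2) * (1 + X) * B + (X - 1) * D =
      X^1*A + X^2*A - X^3*A - X^4*A + B - X^1*B - X^2*B - X^2*B - X^2*B - X^3*B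
        + X^1*D - D := by ring
  rw [h]
  ext n
  simp only [map_add, map_sub, coeff_X_pow_mul', map_zero, hA, hB, hD,
    coeff_derivativeFun_aux, coeff_mk]
  rcases n with _|_|_|_|n
  · norm_num [dCoeff, Nat.factorial]
  · norm_num [dCoeff, Nat.factorial]
  · norm_num [dCoeff, Nat.factorial]
  · norm_num [dCoeff, Nat.factorial]
  · have hk := key (n+2)
    have c1 : 1 ≤ n+4 := by omega
    have c2 : 2 ≤ n+4 := by omega
    have c3 : 3 ≤ n+4 := by omega
    have c4 : 4 ≤ n+4 := by omega
    simp only [if_pos c1, if_pos c2, if_pos c3, if_pos c4]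
    have e1 : n+4-1 = n+3 := rfl
    have e2 : n+4-2 = n+2 := rfl
    have e3 : n+4-3 = n+1 := rfl
    have e4 : n+4-4 = n := rfl
    rw [e1, e2, e3, e4]
    simp only [show n+3+1+1=n+5 from rfl, show n+2+1+1=n+4 from rfl,
      show n+1+1+1=n+3 from rfl, show n+1+1=n+2 from rfl]
    simp only [show n+2+3=n+5 from rfl, show n+2+2=n+4 from rfl,
      show n+2+1=n+3 from rfl] at hk
    push_cast at hk ⊢
    linear_combination hk
end
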